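/- Let R be a ring and (𝒯, ℱ) a torsion pair in R-Mod. If B₁ and B₂ are non-isomorphic torsionfree, almost torsion modules for (𝒯, ℱ), then Hom_R(B₁, B₂) = 0. In particular, the torsionfree, almost torsion modules form a semibrick. -/

import Mathlib

universe u v
variable {R : Type u} [Ring R]

/-- A torsion pair in `R`-Mod: `Hom(𝒯, ℱ) = 0` and both classes are maximal with
this property. -/
def IsTorsionPair (R : Type u) [Ring R] (𝒯 ℱ : Set (ModuleCat.{v} R)) : Prop :=
  (∀ T ∈ 𝒯, ∀ F ∈ ℱ, ∀ f : ↑T →ₗ[R] ↑F, f = 0) ∧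
  (∀ M : ModuleCat.{v} R, (∀ F ∈ ℱ, ∀ f : ↑M →ₗ[R] ↑F, f = 0) → M ∈ 𝒯) ∧
  (∀ M : ModuleCat.{v} R, (∀ T ∈ 𝒯, ∀ f : ↑T →ₗ[R] ↑M, f = 0) → M ∈ ℱ)

/-- Every module has a torsion submodule, lying in `𝒯`, with quotient in `ℱ`. -/
def HasTorsionRadical (R : Type u) [Ring R] (𝒯 ℱ : Set (ModuleCat.{v} R)) : Prop :=
  ∀ M : ModuleCat.{v} R, ∃ tM : Submodule R ↑M,
    ModuleCat.of R tM ∈ 𝒯 ∧ ModuleCat.of R (↑M ⧸ tM) ∈ ℱ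


/-- `B` is torsionfree, almost torsion for `(𝒯, ℱ)`: it is a nonzero torsionfree
module, every proper quotient is torsion, and for every short exact sequence
`0 → B → F → M → 0` with `F ∈ ℱ` also `M ∈ ℱ`. -/
def IsTFAlmostTorsion (𝒯 ℱ : Set (ModuleCat.{v} R)) (B : ModuleCat.{v} R) : Prop :=
  Nontrivial ↑B ∧ B ∈ ℱ ∧
  (∀ N : Submodule R ↑B, N ≠ ⊥ → ModuleCat.of R (↑B ⧸ N) ∈ 𝒯) ∧
  (∀ F ∈ ℱ, ∀ i : ↑B →ₗ[R] ↑F, Function.Injective i →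
    ModuleCat.of R (↑F ⧸ LinearMap.range i) ∈ ℱ)

/-- Two non-isomorphic torsionfree, almost torsion modules for the same torsion pair
are Hom-orthogonal; hence the torsionfree, almost torsion modules form a semibrick. -/
theorem stmt_6 (𝒯 ℱ : Set (ModuleCat.{v} R)) (htp : IsTorsionPair R 𝒯 ℱ)
    (B₁ B₂ : ModuleCat.{v} R)
    (h₁ : IsTFAlmostTorsion 𝒯 ℱ B₁) (h₂ : IsTFAlmostTorsion 𝒯 ℱ B₂)
    (hne : ¬ Nonempty (↑B₁ ≃ₗ[R] ↑B₂)) :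
    ∀ f : ↑B₁ →ₗ[R] ↑B₂, f = 0 := by
  intro f
  by_contra hf
  -- First: f is injective.
  have hker : LinearMap.ker f = ⊥ := by
    by_contra hK
    have hT : ModuleCat.of R (↑B₁ ⧸ LinearMap.ker f) ∈ 𝒯 := h₁.2.2.1 _ hK
    have hz := htp.1 _ hT _ h₂.2.1 ((LinearMap.ker f).liftQ f le_rfl)
    apply hf
    ext x
    have : ((LinearMap.ker f).liftQ f le_rfl) (Submodule.Quotient.mk x) = f x :=
      Submodule.liftQ_apply _ f x
    rw [hz] at this
    simpa using this.symm
  have hinj : Function.Injective f := LinearMap.ker_eq_bot.mp hker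
  -- The cokernel of f is in ℱ.
  have hcoF : ModuleCat.of R (↑B₂ ⧸ LinearMap.range f) ∈ ℱ := h₁.2.2.2 _ h₂.2.1 f hinj
  -- range f ≠ ⊥ since B₁ is nontrivial.
  have hrne : LinearMap.range f ≠ ⊥ := by
    intro h
    obtain ⟨x, y, hxy⟩ := h₁.1
    apply hxy
    apply hinj
    have hx : f x ∈ LinearMap.range f := ⟨x, rfl⟩
    have hy : f y ∈ LinearMap.range f := ⟨y, rfl⟩
    rw [h, Submodule.mem_bot] at hx hy
    rw [hx, hy]
  -- Hence the cokernel is also in 𝒯, so it is zero.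
  have hcoT : ModuleCat.of R (↑B₂ ⧸ LinearMap.range f) ∈ 𝒯 := h₂.2.2.1 _ hrne
  have hid := htp.1 _ hcoT _ hcoF (LinearMap.id)
  have hsub : ∀ x : (↑B₂ ⧸ LinearMap.range f), x = 0 := by
    intro x
    have : LinearMap.id (R := R) x = (0 : (↑B₂ ⧸ LinearMap.range f) →ₗ[R] _) x := by
      rw [hid]
    simpa using this
  have hrtop : LinearMap.range f = ⊤ :=
    Submodule.Quotient.subsingleton_iff.mp ⟨fun a b => by rw [hsub a, hsub b]⟩
  have hsurj : Function.Surjective f := LinearMap.range_eq_top.mp hrtop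
  exact hne ⟨LinearEquiv.ofBijective f ⟨hinj, hsurj⟩⟩
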